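/- Let M be a set, f : M → M, and φ : M → ℝ bounded. Fix x ∈ M that is not eventually periodic, and suppose for every ε > 0 there exist j_ε, k_ε ∈ ℕ such that f^j(x) ∈ E_{k_ε}^ε for all j ≥ j_ε, where E_k^ε = {w : ∑_{i=0}^{m-1} φ(f^i(w)) ≤ m(φ_-(w)+ε) for some m ∈ {1,...,k}} and φ_-(w) = liminf_n (1/n)∑_{i=0}^{n-1} φ(f^i(w)). Then the limit lim_{n→∞} (1/n) ∑_{j=0}^{n-1} φ(f^j(x)) exists. -/

import Mathlib

open Filter

/-- Birkhoff sums. -/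
noncomputable def birkSum {M : Type*} (f : M → M) (φ : M → ℝ) (n : ℕ) (x : M) : ℝ :=
  ∑ j ∈ Finset.range n, φ (f^[j] x)

/-- Lower Birkhoff average. -/
noncomputable def birkLower {M : Type*} (f : M → M) (φ : M → ℝ) (x : M) : ℝ :=
  liminf (fun n : ℕ => birkSum f φ n x / n) atTop

/-- `E_k^ε` for Birkhoff sums. -/
def ESetB {M : Type*} (f : M → M) (φ : M → ℝ) (ε : ℝ) (k : ℕ) : Set M :=
  {x | ∃ m, 1 ≤ m ∧ m ≤ k ∧ birkSum f φ m x ≤ m * (birkLower f φ x + ε)}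

private lemma le_of_all_eps {a b : ℝ} (h : ∀ ε : ℝ, 0 < ε → a ≤ b + ε) : a ≤ b := by
  by_contra hc
  push_neg at hc
  have := h ((a - b) / 2) (by linarith)
  linarith

lemma birkSum_add {M : Type*} (f : M → M) (φ : M → ℝ) (n m : ℕ) (x : M) :
    birkSum f φ (n + m) x = birkSum f φ n x + birkSum f φ m (f^[n] x) := by
  induction m with
  | zero => simp [birkSum]
  | succ m ih =>
      have h1 : n + (m + 1) = (n + m) + 1 := by ring
      rw [h1]
      simp only [birkSum, Finset.sum_range_succ] at *
      rw [ih]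
      have : f^[n + m] x = f^[m] (f^[n] x) := by
        rw [add_comm, Function.iterate_add_apply]
      rw [this]; ring

lemma birkSum_abs_le {M : Type*} (f : M → M) (φ : M → ℝ) {C : ℝ}
    (hbdd : ∀ x, |φ x| ≤ C) (n : ℕ) (x : M) : |birkSum f φ n x| ≤ n * C := by
  calc |birkSum f φ n x| ≤ ∑ j ∈ Finset.range n, |φ (f^[j] x)| :=
        Finset.abs_sum_le_sum_abs _ _
    _ ≤ ∑ _j ∈ Finset.range n, C := Finset.sum_le_sum fun j _ => hbdd _
    _ = n * C := by simp [mul_comm]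

lemma birkAvg_abs_le {M : Type*} (f : M → M) (φ : M → ℝ) {C : ℝ}
    (hbdd : ∀ x, |φ x| ≤ C) (n : ℕ) (x : M) : |birkSum f φ n x / n| ≤ C := by
  have hC : 0 ≤ C := le_trans (abs_nonneg _) (hbdd x)
  rcases Nat.eq_zero_or_pos n with h | h
  · simp [h, birkSum, hC]
  · have hn : (0 : ℝ) < n := by exact_mod_cast h
    rw [abs_div, abs_of_pos hn, div_le_iff₀ hn]
    calc |birkSum f φ n x| ≤ n * C := birkSum_abs_le f φ hbdd n x
      _ = C * n := mul_comm _ _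

/-- liminf is unchanged by adding a sequence tending to zero (for bounded sequences). -/
lemma liminf_add_tendsto_zero (w d : ℕ → ℝ)
    (hle : IsBoundedUnder (· ≤ ·) atTop w) (hge : IsBoundedUnder (· ≥ ·) atTop w)
    (hd : Tendsto d atTop (nhds 0)) :
    liminf (fun n => w n + d n) atTop = liminf w atTop := by
  obtain ⟨B, hB⟩ := hle
  obtain ⟨B', hB'⟩ := hge
  rw [Filter.eventually_map] at hB hB'
  have hd1 : ∀ᶠ n in atTop, d n ≤ 1 :=
    hd.eventually (eventually_le_nhds (by norm_num : (0:ℝ) < 1))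
  have hd1' : ∀ᶠ n in atTop, -1 ≤ d n :=
    hd.eventually (eventually_ge_nhds (by norm_num : (-1:ℝ) < 0))
  have hwd_le : IsBoundedUnder (· ≤ ·) atTop (fun n => w n + d n) :=
    ⟨B + 1, Filter.eventually_map.mpr (by
      filter_upwards [hB, hd1] with n h h'; exact add_le_add h h')⟩
  have hwd_ge : IsBoundedUnder (· ≥ ·) atTop (fun n => w n + d n) :=
    ⟨B' - 1, Filter.eventually_map.mpr (by
      filter_upwards [hB', hd1'] with n h h'
      simp only [ge_iff_le] at *; linarith)⟩
  apply le_antisymm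
  · apply le_of_all_eps
    intro ε hε
    have hev : ∀ᶠ n in atTop, w n + d n ≤ w n + ε := by
      filter_upwards [hd.eventually (eventually_le_nhds hε)] with n h; linarith
    have hbv : IsBoundedUnder (· ≤ ·) atTop (fun n => w n + ε) :=
      ⟨B + ε, Filter.eventually_map.mpr (by
        filter_upwards [hB] with n h; linarith)⟩
    calc liminf (fun n => w n + d n) atTop ≤ liminf (fun n => w n + ε) atTop :=
          liminf_le_liminf hev hwd_ge hbv.isCoboundedUnder_ge
      _ = liminf w atTop + ε := liminf_add_const atTop w ε
          (IsBoundedUnder.isCoboundedUnder_ge ⟨B, Filter.eventually_map.mpr hB⟩)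
          ⟨B', Filter.eventually_map.mpr hB'⟩
  · apply le_of_all_eps
    intro ε hε
    have hev : ∀ᶠ n in atTop, w n ≤ (w n + d n) + ε := by
      filter_upwards [hd.eventually (eventually_ge_nhds (by linarith : -ε < (0:ℝ)))] with n h
      linarith
    have hbv : IsBoundedUnder (· ≤ ·) atTop (fun n => (w n + d n) + ε) :=
      ⟨(B + 1) + ε, Filter.eventually_map.mpr (by
        filter_upwards [hB, hd1] with n h h'; linarith)⟩
    calc liminf w atTop ≤ liminf (fun n => (w n + d n) + ε) atTop :=
          liminf_le_liminf hev ⟨B', Filter.eventually_map.mpr hB'⟩ hbv.isCoboundedUnder_ge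
      _ = liminf (fun n => w n + d n) atTop + ε :=
          liminf_add_const atTop _ ε hwd_le.isCoboundedUnder_ge hwd_ge

set_option maxHeartbeats 1000000 in
lemma birkLower_apply {M : Type*} (f : M → M) (φ : M → ℝ) {C : ℝ}
    (hbdd : ∀ x, |φ x| ≤ C) (x : M) :
    birkLower f φ (f x) = birkLower f φ x := by
  have key : ∀ n : ℕ, 1 ≤ n → birkSum f φ n (f x) / n
      = birkSum f φ (n + 1) x / (n + 1)
        + (birkSum f φ (n + 1) x / ((n : ℝ) * (n + 1)) - φ x / n) := by
    intro n h
    · have hn : (0 : ℝ) < n := by exact_mod_cast h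
      have hn1 : (0 : ℝ) < (n : ℝ) + 1 := by linarith
      have hsplit : birkSum f φ (1 + n) x = birkSum f φ 1 x + birkSum f φ n (f^[1] x) :=
        birkSum_add f φ 1 n x
      have h1 : birkSum f φ 1 x = φ x := by simp [birkSum]
      have h2 : (1 : ℕ) + n = n + 1 := by ring
      rw [h2, h1] at hsplit
      have hfx : f^[1] x = f x := by simp
      rw [hfx] at hsplit
      have : birkSum f φ n (f x) = birkSum f φ (n + 1) x - φ x := by linarith
      rw [this]
      push_cast
      field_simp
      ring
  have hd : Tendsto (fun n : ℕ => birkSum f φ (n + 1) x / ((n : ℝ) * (n + 1)) - φ x / n)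
      atTop (nhds 0) := by
    have h2 : Tendsto (fun n : ℕ => φ x / n) atTop (nhds 0) :=
      tendsto_const_div_atTop_nhds_zero_nat _
    have h1 : Tendsto (fun n : ℕ => birkSum f φ (n + 1) x / ((n : ℝ) * (n + 1)))
        atTop (nhds 0) := by
      apply squeeze_zero_norm (fun n => ?_) (tendsto_const_div_atTop_nhds_zero_nat C)
      rcases Nat.eq_zero_or_pos n with h | h
      · simp [h]
      · have hn : (0 : ℝ) < n := by exact_mod_cast h
        have hn1 : (0 : ℝ) < (n : ℝ) + 1 := by linarith
        rw [Real.norm_eq_abs, abs_div, abs_of_pos (by positivity : (0:ℝ) < (n:ℝ) * ((n:ℝ)+1))]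
        rw [div_le_div_iff₀ (by positivity) hn]
        calc |birkSum f φ (n + 1) x| * n ≤ ((n : ℝ) + 1) * C * n := by
              apply mul_le_mul_of_nonneg_right _ hn.le
              have := birkSum_abs_le f φ hbdd (n + 1) x
              push_cast at this ⊢
              linarith
          _ ≤ C * ((n : ℝ) * ((n : ℝ) + 1)) := le_of_eq (by ring)
    simpa using h1.sub h2
  have hw_le : IsBoundedUnder (· ≤ ·) atTop (fun n : ℕ => birkSum f φ (n + 1) x / (n + 1)) :=
    ⟨C, Filter.eventually_map.mpr (Eventually.of_forall fun n => by
      have := birkAvg_abs_le f φ hbdd (n + 1) x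
      push_cast at this ⊢
      exact (abs_le.mp this).2)⟩
  have hw_ge : IsBoundedUnder (· ≥ ·) atTop (fun n : ℕ => birkSum f φ (n + 1) x / (n + 1)) :=
    ⟨-C, Filter.eventually_map.mpr (Eventually.of_forall fun n => by
      have := birkAvg_abs_le f φ hbdd (n + 1) x
      push_cast at this ⊢
      exact (abs_le.mp this).1)⟩
  have e1 : liminf (fun n : ℕ => birkSum f φ n (f x) / n) atTop
      = liminf (fun n : ℕ => birkSum f φ (n + 1) x / (n + 1)
          + (birkSum f φ (n + 1) x / ((n : ℝ) * (n + 1)) - φ x / n)) atTop := by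
    apply liminf_congr
    filter_upwards [eventually_ge_atTop 1] with n hn
    exact key n hn
  have e2 : liminf (fun n : ℕ => birkSum f φ (n + 1) x / (n + 1)
          + (birkSum f φ (n + 1) x / ((n : ℝ) * (n + 1)) - φ x / n)) atTop
      = liminf (fun n : ℕ => birkSum f φ (n + 1) x / (n + 1)) atTop :=
    liminf_add_tendsto_zero _ _ hw_le hw_ge hd
  have e3 : liminf (fun n : ℕ => birkSum f φ (n + 1) x / ((n : ℝ) + 1)) atTop
      = liminf (fun n : ℕ => birkSum f φ n x / (n : ℝ)) atTop := by
    have hfun : (fun n : ℕ => birkSum f φ (n + 1) x / ((n : ℝ) + 1))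
        = fun n : ℕ => birkSum f φ (n + 1) x / (((n + 1 : ℕ) : ℝ)) := by
      funext n; push_cast; ring
    rw [hfun]
    exact liminf_nat_add (fun n : ℕ => birkSum f φ n x / (n : ℝ)) 1
  rw [birkLower, birkLower, e1, e2]
  exact_mod_cast e3

lemma birkLower_iterate {M : Type*} (f : M → M) (φ : M → ℝ) {C : ℝ}
    (hbdd : ∀ x, |φ x| ≤ C) (x : M) (j : ℕ) :
    birkLower f φ (f^[j] x) = birkLower f φ x := by
  induction j with
  | zero => simp
  | succ j ih =>
      rw [Function.iterate_succ_apply', birkLower_apply f φ hbdd, ih]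

/-- The Birkhoff limit exists at a non-eventually-periodic point whose orbit is
eventually absorbed into the sets `E_k^ε`. -/
theorem birkhoff_limit_of_absorption {M : Type*} (f : M → M) (φ : M → ℝ)
    (C : ℝ) (hbdd : ∀ x, |φ x| ≤ C) (x : M)
    (hnp : ¬ ∃ j m : ℕ, 1 ≤ m ∧ f^[m] (f^[j] x) = f^[j] x)
    (habs : ∀ ε : ℝ, 0 < ε → ∃ jε kε : ℕ, ∀ j : ℕ, jε ≤ j →
      f^[j] x ∈ ESetB f φ ε kε) :
    ∃ L : ℝ, Tendsto (fun n : ℕ => birkSum f φ n x / n) atTop (nhds L) := by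
  clear hnp
  set a : ℕ → ℝ := fun n => birkSum f φ n x / n with ha
  have habs_a : ∀ n, |a n| ≤ C := fun n => birkAvg_abs_le f φ hbdd n x
  have hC : 0 ≤ C := le_trans (abs_nonneg _) (hbdd x)
  have hle : IsBoundedUnder (· ≤ ·) atTop a :=
    ⟨C, Filter.eventually_map.mpr (Eventually.of_forall fun n => (abs_le.mp (habs_a n)).2)⟩
  have hge : IsBoundedUnder (· ≥ ·) atTop a :=
    ⟨-C, Filter.eventually_map.mpr (Eventually.of_forall fun n => (abs_le.mp (habs_a n)).1)⟩
  set L : ℝ := liminf a atTop with hL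
  have hLb : birkLower f φ x = L := rfl
  -- main estimate: limsup a ≤ L + ε for every ε > 0
  have hmain : ∀ ε : ℝ, 0 < ε → limsup a atTop ≤ L + ε := by
    intro ε hε
    obtain ⟨jε, kε, hjk⟩ := habs ε hε
    have hspec : ∀ j : ℕ, jε ≤ j → ∃ m, 1 ≤ m ∧ m ≤ kε ∧
        birkSum f φ m (f^[j] x) ≤ m * (L + ε) := by
      intro j hj
      obtain ⟨m, h1, h2, h3⟩ := hjk j hj
      rw [birkLower_iterate f φ hbdd x j, hLb] at h3
      exact ⟨m, h1, h2, h3⟩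
    classical
    -- step function
    let g : ℕ → ℕ := fun j => if h : jε ≤ j then (hspec j h).choose else 1
    have hg : ∀ j, jε ≤ j → 1 ≤ g j ∧ g j ≤ kε ∧
        birkSum f φ (g j) (f^[j] x) ≤ g j * (L + ε) := by
      intro j hj
      simp only [g, dif_pos hj]
      exact (hspec j hj).choose_spec
    -- the times t i
    let t : ℕ → ℕ := fun i => Nat.rec (motive := fun _ => ℕ) jε (fun _ prev => prev + g prev) i
    have ht0 : t 0 = jε := rfl
    have hts : ∀ i, t (i + 1) = t i + g (t i) := fun i => rfl
    have htge : ∀ i, jε ≤ t i := by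
      intro i
      induction i with
      | zero => exact le_rfl
      | succ i ih => rw [hts]; omega
    have htgrow : ∀ i, jε + i ≤ t i := by
      intro i
      induction i with
      | zero => simp [ht0]
      | succ i ih =>
          have := (hg (t i) (htge i)).1
          rw [hts]; omega
    have hsum : ∀ i, birkSum f φ (t i) x
        ≤ birkSum f φ jε x + ((t i : ℝ) - jε) * (L + ε) := by
      intro i
      induction i with
      | zero => simp [ht0]
      | succ i ih =>
          have hgi := hg (t i) (htge i)
          have hbs : birkSum f φ (t (i + 1)) x
              = birkSum f φ (t i) x + birkSum f φ (g (t i)) (f^[t i] x) := by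
            rw [hts]; exact birkSum_add f φ (t i) (g (t i)) x
          have hcast : ((t (i + 1) : ℝ)) = (t i : ℝ) + (g (t i) : ℝ) := by
            rw [hts]; push_cast; ring
          rw [hbs, hcast]
          have := hgi.2.2
          nlinarith [hgi.2.2]
    -- bound a n eventually
    set D : ℝ := |birkSum f φ jε x| + (jε : ℝ) * |L + ε| + kε * C + kε * |L + ε| with hD
    have hbound : ∀ n : ℕ, jε ≤ n → birkSum f φ n x ≤ n * (L + ε) + D := by
      intro n hn
      -- find i with t i ≤ n < t (i+1)
      have hex : ∃ i, n < t i := ⟨n + 1, by have := htgrow (n + 1); omega⟩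
      set i0 := Nat.find hex with hi0
      have hi0pos : i0 ≠ 0 := by
        intro h
        have := Nat.find_spec hex
        rw [← hi0, h, ht0] at this
        omega
      obtain ⟨i, hi⟩ := Nat.exists_eq_succ_of_ne_zero hi0pos
      have hlt : n < t (i + 1) := by
        have h := Nat.find_spec hex
        rw [← hi0, hi] at h
        exact h
      have hge' : t i ≤ n := by
        by_contra hc
        push_neg at hc
        exact Nat.find_min hex (by omega : i < i0) hc
      have hgap : n - t i ≤ kε := by
        have := (hg (t i) (htge i)).2.1
        rw [hts] at hlt
        omega
      have hsplit : birkSum f φ n x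
          = birkSum f φ (t i) x + birkSum f φ (n - t i) (f^[t i] x) := by
        have h := birkSum_add f φ (t i) (n - t i) x
        rwa [show t i + (n - t i) = n by omega] at h
      have htail : birkSum f φ (n - t i) (f^[t i] x) ≤ (kε : ℝ) * C := by
        calc birkSum f φ (n - t i) (f^[t i] x) ≤ |birkSum f φ (n - t i) (f^[t i] x)| :=
              le_abs_self _
          _ ≤ ((n - t i : ℕ) : ℝ) * C := birkSum_abs_le f φ hbdd _ _
          _ ≤ (kε : ℝ) * C := by
              apply mul_le_mul_of_nonneg_right _ hC
              exact_mod_cast hgap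
      have h1 : birkSum f φ jε x ≤ |birkSum f φ jε x| := le_abs_self _
      have h2 : ((t i : ℝ) - jε) * (L + ε)
          ≤ ((n : ℝ) - jε) * (L + ε) + (kε : ℝ) * |L + ε| := by
        have hδ : ((n : ℝ) - t i) ≥ 0 := by
          have : (t i : ℝ) ≤ n := by exact_mod_cast hge'
          linarith
        have hδ2 : ((n : ℝ) - t i) ≤ kε := by
          have h3 : (n : ℝ) - t i = ((n - t i : ℕ) : ℝ) := by
            push_cast [Nat.cast_sub hge']; ring
          rw [h3]; exact_mod_cast hgap
        have : -(((n : ℝ) - t i) * (L + ε)) ≤ (kε : ℝ) * |L + ε| := by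
          calc -(((n : ℝ) - t i) * (L + ε)) ≤ |((n : ℝ) - t i) * (L + ε)| := neg_le_abs _
            _ = ((n : ℝ) - t i) * |L + ε| := by rw [abs_mul, abs_of_nonneg hδ]
            _ ≤ (kε : ℝ) * |L + ε| := mul_le_mul_of_nonneg_right hδ2 (abs_nonneg _)
        nlinarith
      have h3 : ((n : ℝ) - jε) * (L + ε) ≤ (n : ℝ) * (L + ε) + (jε : ℝ) * |L + ε| := by
        have : -((jε : ℝ) * (L + ε)) ≤ (jε : ℝ) * |L + ε| := by
          calc -((jε : ℝ) * (L + ε)) ≤ |(jε : ℝ) * (L + ε)| := neg_le_abs _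
            _ = (jε : ℝ) * |L + ε| := by rw [abs_mul, Nat.abs_cast]
        nlinarith
      have := hsum i
      rw [hsplit, hD]
      linarith
    -- conclude : limsup a ≤ L + ε
    have hev : ∀ᶠ n in atTop, a n ≤ (L + ε) + D / n := by
      filter_upwards [eventually_ge_atTop (max jε 1)] with n hn
      have hn1 : 1 ≤ n := le_trans (le_max_right _ _) hn
      have hnj : jε ≤ n := le_trans (le_max_left _ _) hn
      have hnp : (0 : ℝ) < n := by exact_mod_cast hn1
      have := hbound n hnj
      rw [ha]
      calc birkSum f φ n x / n ≤ ((n : ℝ) * (L + ε) + D) / n := by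
            exact div_le_div_of_nonneg_right this hnp.le
        _ = (L + ε) + D / n := by field_simp
    have htend : Tendsto (fun n : ℕ => (L + ε) + D / n) atTop (nhds (L + ε)) := by
      have := tendsto_const_div_atTop_nhds_zero_nat D
      simpa using tendsto_const_nhds.add this
    calc limsup a atTop ≤ limsup (fun n : ℕ => (L + ε) + D / n) atTop :=
          limsup_le_limsup hev hge.isCoboundedUnder_le htend.isBoundedUnder_le
      _ = L + ε := htend.limsup_eq
  have hsup : limsup a atTop ≤ L := le_of_all_eps hmain
  have hinf : L ≤ limsup a atTop := liminf_le_limsup hle hge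
  exact ⟨L, tendsto_of_liminf_eq_limsup rfl (le_antisymm hsup hinf) hle hge⟩
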